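/- Let P = (X,≺) be a finite poset with n elements, a ∈ X, and let N_k denote the number of linear extensions L with L(a) = k. If N_{k−1} > 0, then N_k ≤ (k−1)·N_{k−1}; and if N_{k+1} > 0, then N_k ≤ (n−k)·N_{k+1}. -/

import Mathlib

/-- The number of linear extensions `L` of a finite poset `X`
(order-preserving bijections `X ≃ Fin (card X)`, positions taken in `{1, …, n}`)
with `L a = j`. -/
noncomputable def NE (X : Type) [PartialOrder X] [Fintype X] (a : X) (j : ℕ) : ℕ :=
  Nat.card {L : X ≃ Fin (Fintype.card X) // (∀ p q : X, p < q → L p < L q) ∧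
    (L a : ℕ) + 1 = j}

def sfun (j k p : ℕ) : ℕ := if p < j ∨ k < p then p else if p = j then k else p - 1
def tfun (j k p : ℕ) : ℕ := if p < j ∨ k < p then p else if p = k then j else p + 1

def sperm {n : ℕ} (j k : Fin n) : Equiv.Perm (Fin n) where
  toFun p := ⟨sfun j.val k.val p.val, by
    have := p.isLt; have := k.isLt; unfold sfun; split_ifs <;> omega⟩
  invFun p := ⟨tfun j.val k.val p.val, by
    have := p.isLt; have := j.isLt; have := k.isLt; unfold tfun; split_ifs <;> omega⟩
  left_inv p := by
    apply Fin.ext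
    show tfun _ _ (sfun _ _ p.val) = p.val
    have := p.isLt; unfold sfun tfun; split_ifs <;> omega
  right_inv p := by
    apply Fin.ext
    show sfun _ _ (tfun _ _ p.val) = p.val
    have := p.isLt; unfold sfun tfun; split_ifs <;> omega

lemma sperm_apply_val {n : ℕ} (j k p : Fin n) :
    ((sperm j k) p).val = sfun j.val k.val p.val := rfl

lemma NE_core (X : Type) [PartialOrder X] [Fintype X] (a : X) (k : ℕ)
    (h : 0 < NE X a (k - 1)) : NE X a k ≤ (k - 1) * NE X a (k - 1) := by
  classical
  unfold NE at h ⊢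
  set n := Fintype.card X with hn
  obtain ⟨⟨⟨M₀, hM₀ext, hM₀a⟩⟩, _⟩ := Nat.card_pos_iff.mp h
  have hk2 : 2 ≤ k := by omega
  have hM₀v : (M₀ a).val = k - 2 := by omega
  by_cases hAk : Nonempty {L : X ≃ Fin n // (∀ p q : X, p < q → L p < L q) ∧ (L a : ℕ) + 1 = k}
  swap
  · rw [not_nonempty_iff] at hAk
    simp [Nat.card_of_isEmpty]
  obtain ⟨⟨L₀, hL₀ext, hL₀a⟩⟩ := hAk
  have hk1n : k - 1 < n := by have := (L₀ a).isLt; omega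
  have Kf : Fin n := ⟨k - 1, hk1n⟩
  -- key step
  have key : ∀ L : {L : X ≃ Fin n // (∀ p q : X, p < q → L p < L q) ∧ (L a : ℕ) + 1 = k},
      ∃ (M : {L : X ≃ Fin n // (∀ p q : X, p < q → L p < L q) ∧ (L a : ℕ) + 1 = k - 1})
        (jf : Fin (k - 1)),
        M.1 = L.1.trans (sperm ⟨jf.val, Nat.lt_trans jf.isLt hk1n⟩ ⟨k - 1, hk1n⟩) := by
    rintro ⟨L, hLext, hLa⟩
    have hK : (L a).val = k - 1 := by omega
    set S : Finset (Fin n) :=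
      Finset.univ.filter (fun p : Fin n => p.val < k - 1 ∧ ¬(L.symm p < a)) with hS
    have hSne : S.Nonempty := by
      by_contra hSe
      rw [Finset.not_nonempty_iff_eq_empty] at hSe
      have hall : ∀ p : Fin n, p.val < k - 1 → L.symm p < a := by
        intro p hp
        by_contra hpa
        have hmem : p ∈ S := by simp [hS, hp, hpa]
        rw [hSe] at hmem
        exact absurd hmem (Finset.notMem_empty p)
      have hD1 : (Finset.univ.filter (fun x : X => x < a)).card ≤ (Finset.range (k - 2)).card := by
        apply Finset.card_le_card_of_injOn (fun x => (M₀ x).val)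
        · intro x hx
          simp only [Finset.mem_coe, Finset.mem_filter, Finset.mem_univ, true_and] at hx
          have : M₀ x < M₀ a := hM₀ext _ _ hx
          rw [Finset.mem_coe, Finset.mem_range]
          show (M₀ x).val < k - 2
          omega
        · intro x _ y _ hxy
          exact M₀.injective (Fin.val_injective hxy)
      have hD2 : (Finset.range (k - 1)).card ≤ (Finset.univ.filter (fun x : X => x < a)).card := by
        apply Finset.card_le_card_of_injOn
          (fun i : ℕ => L.symm ⟨i % n, Nat.mod_lt _ (by omega)⟩)
        · intro i hi
          simp only [Finset.coe_range, Set.mem_Iio, Finset.mem_range] at hi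
          simp only [Finset.mem_coe, Finset.mem_filter, Finset.mem_univ, true_and]
          have hin : i % n = i := Nat.mod_eq_of_lt (lt_trans hi hk1n)
          exact hall ⟨i % n, Nat.mod_lt _ (by omega)⟩ (by show i % n < k - 1; rw [hin]; exact hi)
        · intro i hi i' hi' hii
          simp only [Finset.coe_range, Set.mem_Iio] at hi hi'
          have h1 := L.symm.injective hii
          have h2 : i % n = i' % n := congrArg Fin.val h1
          have hmi : i % n = i := Nat.mod_eq_of_lt (lt_trans hi hk1n)
          have hmi' : i' % n = i' := Nat.mod_eq_of_lt (lt_trans hi' hk1n)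
          rw [hmi, hmi'] at h2
          exact h2
      rw [Finset.card_range] at hD1 hD2
      omega
    set j : Fin n := S.max' hSne with hj
    have hjmem : j ∈ S := S.max'_mem hSne
    have hjmax : ∀ p ∈ S, p ≤ j := fun p hp => S.le_max' p hp
    rw [hS, Finset.mem_filter] at hjmem
    obtain ⟨-, hjlt, hja⟩ := hjmem
    have hjn : j.val < n := j.isLt
    -- the new extension
    have hext : ∀ p q : X, p < q → (L.trans (sperm j ⟨k-1, hk1n⟩)) p < (L.trans (sperm j ⟨k-1, hk1n⟩)) q := by
      intro p q hpq
      have huv : (L p).val < (L q).val := hLext p q hpq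
      rw [Fin.lt_def]
      show sfun j.val (k-1) (L p).val < sfun j.val (k-1) (L q).val
      by_cases hu1 : (L p).val = j.val
      · have hpj : p = L.symm j := by
          rw [Equiv.eq_symm_apply]
          exact Fin.ext hu1
        by_cases hv1 : (L q).val ≤ k - 1
        · exfalso
          apply hja
          rw [← hpj]
          by_cases hvK : (L q).val = k - 1
          · have hqa : q = a := L.injective (Fin.ext (by omega))
            rwa [hqa] at hpq
          · have hqa : q < a := by
              by_contra hq
              have hqS : L q ∈ S := by
                rw [hS, Finset.mem_filter]
                refine ⟨Finset.mem_univ _, by omega, ?_⟩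
                rwa [Equiv.symm_apply_apply]
              have hle := hjmax _ hqS
              rw [Fin.le_def] at hle
              omega
            exact lt_trans hpq hqa
        · unfold sfun; split_ifs <;> omega
      · unfold sfun; split_ifs <;> omega
    have hpos : (((L.trans (sperm j ⟨k-1, hk1n⟩)) a : Fin n) : ℕ) + 1 = k - 1 := by
      show sfun j.val (k-1) (L a).val + 1 = k - 1
      rw [hK]
      unfold sfun; split_ifs <;> omega
    refine ⟨⟨L.trans (sperm j ⟨k-1, hk1n⟩), hext, hpos⟩, ⟨j.val, hjlt⟩, ?_⟩
    rfl
  -- the injection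
  have hinj : Function.Injective
      (fun L : {L : X ≃ Fin n // (∀ p q : X, p < q → L p < L q) ∧ (L a : ℕ) + 1 = k} =>
        (((key L).choose, (key L).choose_spec.choose) :
          {L : X ≃ Fin n // (∀ p q : X, p < q → L p < L q) ∧ (L a : ℕ) + 1 = k - 1} × Fin (k - 1))) := by
    intro L1 L2 hEq
    have h1 := (key L1).choose_spec.choose_spec
    have h2 := (key L2).choose_spec.choose_spec
    have hM : ((key L1).choose : X ≃ Fin n) = ((key L2).choose : X ≃ Fin n) := by
      have := congrArg Prod.fst hEq
      exact congrArg Subtype.val this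
    have hjv : ((key L1).choose_spec.choose : Fin (k-1)).val
        = ((key L2).choose_spec.choose : Fin (k-1)).val := by
      have := congrArg Prod.snd hEq
      exact congrArg Fin.val this
    set j1 := (key L1).choose_spec.choose with hj1
    set j2 := (key L2).choose_spec.choose with hj2
    have hjfin : (⟨j1.val, Nat.lt_trans j1.isLt hk1n⟩ : Fin n)
        = ⟨j2.val, Nat.lt_trans j2.isLt hk1n⟩ := Fin.ext hjv
    have hσ : sperm (⟨j1.val, Nat.lt_trans j1.isLt hk1n⟩ : Fin n) ⟨k - 1, hk1n⟩
        = sperm ⟨j2.val, Nat.lt_trans j2.isLt hk1n⟩ ⟨k - 1, hk1n⟩ := by rw [hjfin]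
    have hTr : L1.1.trans (sperm (⟨j1.val, Nat.lt_trans j1.isLt hk1n⟩ : Fin n) ⟨k - 1, hk1n⟩)
        = L2.1.trans (sperm (⟨j1.val, Nat.lt_trans j1.isLt hk1n⟩ : Fin n) ⟨k - 1, hk1n⟩) := by
      rw [← h1, hσ, ← h2, hM]
    apply Subtype.ext
    apply Equiv.ext
    intro x
    have := congrArg (fun e : X ≃ Fin n => e x) hTr
    simp only [Equiv.trans_apply] at this
    exact (sperm (⟨j1.val, Nat.lt_trans j1.isLt hk1n⟩ : Fin n) ⟨k - 1, hk1n⟩).injective this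
  calc Nat.card {L : X ≃ Fin n // (∀ p q : X, p < q → L p < L q) ∧ (L a : ℕ) + 1 = k}
      ≤ Nat.card ({L : X ≃ Fin n // (∀ p q : X, p < q → L p < L q) ∧ (L a : ℕ) + 1 = k - 1} × Fin (k - 1)) :=
        Nat.card_le_card_of_injective _ hinj
    _ = (k - 1) * Nat.card {L : X ≃ Fin n // (∀ p q : X, p < q → L p < L q) ∧ (L a : ℕ) + 1 = k - 1} := by
        rw [Nat.card_prod]
        simp [mul_comm]

lemma NE_dual (X : Type) [PartialOrder X] [Fintype X] (a : X) (j : ℕ) :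
    NE X a j = NE Xᵒᵈ (OrderDual.toDual a) (Fintype.card X + 1 - j) := by
  unfold NE
  apply Nat.card_congr
  apply Equiv.subtypeEquiv (Equiv.equivCongr (OrderDual.toDual (α := X)) Fin.revPerm)
  intro L
  have hrev : ∀ i : Fin (Fintype.card X), (Fin.rev i).val = Fintype.card X - 1 - i.val := by
    intro i; rw [Fin.val_rev]; omega
  constructor
  · rintro ⟨hext, hpos⟩
    constructor
    · intro p q hpq
      have h1 : (OrderDual.ofDual q) < (OrderDual.ofDual p) := hpq
      exact Fin.rev_lt_rev.mpr (hext _ _ h1)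
    · have hlt := (L a).isLt
      show (Fin.rev (L a) : ℕ) + 1 = Fintype.card X + 1 - j
      rw [hrev]
      omega
  · rintro ⟨hext, hpos⟩
    constructor
    · intro p q hpq
      have h2 : Fin.rev (L q) < Fin.rev (L p) :=
        hext (OrderDual.toDual q) (OrderDual.toDual p) hpq
      exact Fin.rev_lt_rev.mp h2
    · have hlt := (L a).isLt
      have hpos' : (Fin.rev (L a) : ℕ) + 1 = Fintype.card X + 1 - j := hpos
      rw [hrev] at hpos'
      omega



theorem single_element_ratio_bounds (X : Type) [PartialOrder X] [Fintype X]
    (n : ℕ) (hn : Fintype.card X = n) (a : X) (k : ℕ) (hk : 1 ≤ k) :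
    (0 < NE X a (k - 1) → NE X a k ≤ (k - 1) * NE X a (k - 1)) ∧
    (0 < NE X a (k + 1) → NE X a k ≤ (n - k) * NE X a (k + 1)) := by
  constructor
  · exact NE_core X a k
  · intro h2
    -- k + 1 ≤ n
    have hkn : k + 1 ≤ n := by
      unfold NE at h2
      obtain ⟨⟨⟨L, hLext, hLa⟩⟩, -⟩ := Nat.card_pos_iff.mp h2
      have := (L a).isLt
      omega
    have e1 : NE X a (k + 1) = NE Xᵒᵈ (OrderDual.toDual a) (n - k) := by
      rw [NE_dual, hn]
      congr 1
      omega
    have e2 : NE X a k = NE Xᵒᵈ (OrderDual.toDual a) (n + 1 - k) := by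
      rw [NE_dual, hn]
    have e3 : n + 1 - k - 1 = n - k := by omega
    have := NE_core Xᵒᵈ (OrderDual.toDual a) (n + 1 - k) (by rw [e3, ← e1]; exact h2)
    rw [e3, ← e1, ← e2] at this
    exact this
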